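/- A finite multigraph G has an odd factor (a spanning subgraph in which every vertex has odd degree) if and only if every connected component of G has an even number of vertices. -/

import Mathlib

open Finset
open scoped Classical

/-- A multigraph on vertex type `V` with edge index type `E`: each edge `e` has two
distinct endpoints given as an unordered pair `ends e` (no loops, multiple edges allowed). -/
structure Multigraph (V : Type) (E : Type) where
  ends : E → Sym2 V
  no_loops : ∀ e, ¬ (ends e).IsDiag

namespace Multigraph

variable {V E : Type} [Fintype V] [Fintype E]

/-- The number of edges from the edge set `F` incident with `v`. -/
noncomputable def degIn (G : Multigraph V E) (F : Finset E) (v : V) : ℕ :=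
  (F.filter (fun e => v ∈ G.ends e)).card

/-- The degree of `v` in `G`. -/
noncomputable def deg (G : Multigraph V E) (v : V) : ℕ := G.degIn Finset.univ v

/-- The underlying simple graph of `G`. -/
def simple (G : Multigraph V E) : SimpleGraph V where
  Adj x y := x ≠ y ∧ ∃ e : E, G.ends e = s(x, y)
  symm := ⟨by
    rintro x y ⟨hxy, e, he⟩
    exact ⟨hxy.symm, e, by rw [he, Sym2.eq_swap]⟩⟩
  loopless := ⟨fun x h => h.1 rfl⟩

/-- `C` is the vertex set of a connected component of the subgraph of `G` induced by `S`. -/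
def IsComponentOf (G : Multigraph V E) (S : Set V) (C : Finset V) : Prop :=
  ∃ v ∈ S, ∀ x : V, x ∈ C ↔
    Relation.ReflTransGen (fun a b => a ∈ S ∧ b ∈ S ∧ (G.simple).Adj a b) v x

/-- The number of edges of `G` with one endpoint in `U₁` and the other in `U₂`. -/
noncomputable def eBetween (G : Multigraph V E) (U₁ U₂ : Finset V) : ℕ :=
  (Finset.univ.filter (fun e : E => ∃ x ∈ U₁, ∃ y ∈ U₂, G.ends e = s(x, y))).card

/-- The set of vertices of `G` of odd degree. -/
noncomputable def oddVerts (G : Multigraph V E) : Finset V :=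
  Finset.univ.filter (fun v => Odd (G.deg v))

/-- The set of vertices of `G` of even degree. -/
noncomputable def evenVerts (G : Multigraph V E) : Finset V :=
  Finset.univ.filter (fun v => Even (G.deg v))

/-- `F` forms an odd subgraph: every vertex incident with an edge of `F` has odd `F`-degree. -/
def IsOddSet (G : Multigraph V E) (F : Finset E) : Prop :=
  ∀ v : V, (∃ e ∈ F, v ∈ G.ends e) → Odd (G.degIn F v)

/-- `F` forms an even subgraph: every vertex has even `F`-degree. -/
def IsEvenSet (G : Multigraph V E) (F : Finset E) : Prop :=
  ∀ v : V, Even (G.degIn F v)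

end Multigraph

open Multigraph
open scoped symmDiff

section Aux

variable {V E : Type} [Fintype V] [Fintype E] (G : Multigraph V E)

lemma aux_card_symmDiff (A B : Finset E) :
    A.card + B.card = (A ∆ B).card + 2 * (A ∩ B).card := by
  have h1 := Finset.card_sdiff_add_card_inter A B
  have h2 := Finset.card_sdiff_add_card_inter B A
  have h3 : (A ∆ B).card = (A \ B).card + (B \ A).card := by
    rw [symmDiff_def, Finset.sup_eq_union]
    exact Finset.card_union_of_disjoint disjoint_sdiff_sdiff
  rw [Finset.inter_comm B A] at h2
  omega

lemma aux_degIn_symmDiff (F F' : Finset E) (x : V) :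
    (G.degIn (F ∆ F') x : ZMod 2) = (G.degIn F x : ZMod 2) + (G.degIn F' x : ZMod 2) := by
  unfold Multigraph.degIn
  have hfilt : (F ∆ F').filter (fun e => x ∈ G.ends e)
      = (F.filter (fun e => x ∈ G.ends e)) ∆ (F'.filter (fun e => x ∈ G.ends e)) := by
    ext e
    simp only [Finset.mem_filter, Finset.mem_symmDiff]
    tauto
  rw [hfilt]
  set A := F.filter (fun e => x ∈ G.ends e)
  set B := F'.filter (fun e => x ∈ G.ends e)
  have := aux_card_symmDiff A B
  have : ((A.card + B.card : ℕ) : ZMod 2) = (((A ∆ B).card + 2 * (A ∩ B).card : ℕ) : ZMod 2) := by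
    rw [this]
  push_cast at this
  have h2 : (2 : ZMod 2) = 0 := by decide
  rw [h2] at this
  simp at this
  rw [← this]

lemma aux_degIn_empty (x : V) : G.degIn (∅ : Finset E) x = 0 := by
  simp [Multigraph.degIn]

lemma aux_degIn_singleton (e : E) (x : V) :
    (G.degIn {e} x : ZMod 2) = if x ∈ G.ends e then 1 else 0 := by
  simp [Multigraph.degIn, Finset.filter_singleton]
  split <;> simp

lemma aux_exists_parity (u v : V) (h : G.simple.Reachable u v) :
    ∃ F : Finset E, ∀ x : V,
      (G.degIn F x : ZMod 2) = (if x = u then 1 else 0) + (if x = v then 1 else 0) := by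
  rw [SimpleGraph.reachable_iff_reflTransGen] at h
  induction h with
  | refl =>
    refine ⟨∅, fun x => ?_⟩
    rw [aux_degIn_empty]
    split <;> decide
  | tail _ hadj ih =>
    rename_i w v _
    obtain ⟨F, hF⟩ := ih
    obtain ⟨hne, e, he⟩ : w ≠ v ∧ ∃ e, G.ends e = s(w, v) := hadj
    refine ⟨F ∆ {e}, fun x => ?_⟩
    rw [aux_degIn_symmDiff, hF, aux_degIn_singleton, he]
    have hmem : (x ∈ s(w, v)) ↔ (x = w ∨ x = v) := Sym2.mem_iff
    have hind : (if x ∈ s(w, v) then (1 : ZMod 2) else 0)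
        = (if x = w then 1 else 0) + (if x = v then 1 else 0) := by
      by_cases hw : x = w <;> by_cases hv : x = v
      · exact absurd (hw ▸ hv) hne
      · simp [hmem, hw, hv, hne]
      · simp [hmem, hw, hv, Ne.symm hne]
      · simp [hmem, hw, hv]
    rw [hind]
    have hww : (if x = w then (1 : ZMod 2) else 0) + (if x = w then 1 else 0) = 0 := by
      split <;> decide
    calc (if x = u then (1:ZMod 2) else 0) + (if x = w then 1 else 0)
          + ((if x = w then 1 else 0) + (if x = v then 1 else 0))
        = ((if x = u then (1:ZMod 2) else 0) + (if x = v then 1 else 0))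
          + ((if x = w then (1:ZMod 2) else 0) + (if x = w then 1 else 0)) := by ring
      _ = (if x = u then (1:ZMod 2) else 0) + (if x = v then 1 else 0) := by
          rw [hww, add_zero]

end Aux

theorem stmt0 {V E : Type} [Fintype V] [Fintype E] (G : Multigraph V E) :
    (∃ F : Finset E, ∀ v : V, Odd (G.degIn F v)) ↔
    ∀ c : G.simple.ConnectedComponent,
      Even (Nat.card {v : V // G.simple.connectedComponentMk v = c}) := by
  have hcard : ∀ c : G.simple.ConnectedComponent,
      Nat.card {v : V // G.simple.connectedComponentMk v = c}
        = (Finset.univ.filter (fun v => G.simple.connectedComponentMk v = c)).card := by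
    intro c
    rw [Nat.card_eq_fintype_card, Fintype.card_subtype]
  constructor
  · -- forward: odd factor implies even components
    rintro ⟨F, hF⟩ c
    rw [hcard]
    set C := Finset.univ.filter (fun v => G.simple.connectedComponentMk v = c) with hC
    have hmemC : ∀ v, v ∈ C ↔ G.simple.connectedComponentMk v = c := by
      intro v; simp [hC]
    -- each edge of F has an even number of endpoints in C
    have hinner : ∀ e : E, Even ((C.filter (fun v => v ∈ G.ends e)).card) := by
      intro e
      obtain ⟨a, b, hab⟩ : ∃ a b, G.ends e = s(a, b) :=
        Sym2.ind (fun a b => ⟨a, b, rfl⟩) (G.ends e)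
      have hne : a ≠ b := by
        intro h
        exact G.no_loops e (by rw [hab, h]; exact Sym2.mk_isDiag_iff.2 rfl)
      have hadj : G.simple.Adj a b := (⟨hne, e, hab⟩ : a ≠ b ∧ ∃ e, G.ends e = s(a, b))
      have hreach : G.simple.connectedComponentMk a = G.simple.connectedComponentMk b :=
        SimpleGraph.ConnectedComponent.sound hadj.reachable
      have hfe : C.filter (fun v => v ∈ G.ends e) = C ∩ {a, b} := by
        ext v
        simp [hab, Sym2.mem_iff, Finset.mem_inter, Finset.mem_insert, and_comm]
      rw [hfe]
      by_cases ha : a ∈ C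
      · have hb : b ∈ C := by
          rw [hmemC] at ha ⊢; rw [← hreach]; exact ha
        have : C ∩ {a, b} = {a, b} := by
          apply Finset.inter_eq_right.2
          intro v hv
          rcases Finset.mem_insert.1 hv with h | h
          · exact h ▸ ha
          · exact (Finset.mem_singleton.1 h) ▸ hb
        rw [this, Finset.card_insert_of_notMem (by simpa using hne), Finset.card_singleton]
        exact ⟨1, rfl⟩
      · have hb : b ∉ C := by
          rw [hmemC] at ha ⊢; rw [← hreach]; exact ha
        have : C ∩ {a, b} = ∅ := by
          apply Finset.eq_empty_of_forall_notMem
          intro v hv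
          rw [Finset.mem_inter] at hv
          rcases Finset.mem_insert.1 hv.2 with h | h
          · exact ha (h ▸ hv.1)
          · exact hb ((Finset.mem_singleton.1 h) ▸ hv.1)
        rw [this]
        exact ⟨0, rfl⟩
    have hsum : (∑ v ∈ C, G.degIn F v) = ∑ e ∈ F, (C.filter (fun v => v ∈ G.ends e)).card := by
      unfold Multigraph.degIn
      simp only [Finset.card_filter]
      rw [Finset.sum_comm]
    have heven : Even (∑ v ∈ C, G.degIn F v) := by
      rw [hsum]
      exact Finset.even_sum _ fun e _ => hinner e
    have h1 : ((∑ v ∈ C, G.degIn F v : ℕ) : ZMod 2) = (C.card : ZMod 2) := by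
      push_cast
      rw [Finset.sum_congr rfl (fun v _ => (ZMod.natCast_eq_one_iff_odd).2 (hF v))]
      simp
    rw [← ZMod.natCast_eq_zero_iff_even] at heven ⊢
    rw [← h1, heven]
  · -- backward: even components implies odd factor
    intro hc
    -- choose a representative of each component
    have hrep : ∀ c : G.simple.ConnectedComponent, ∃ v : V, G.simple.connectedComponentMk v = c :=
      fun c => c.exists_rep
    set rep : G.simple.ConnectedComponent → V := fun c => (hrep c).choose with hrepdef
    have hrepspec : ∀ c, G.simple.connectedComponentMk (rep c) = c := fun c => (hrep c).choose_spec
    have key : ∀ s : Finset V, ∃ F : Finset E, ∀ x : V,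
        (G.degIn F x : ZMod 2) = ∑ v ∈ s, ((if x = v then 1 else 0)
          + (if x = rep (G.simple.connectedComponentMk v) then 1 else 0)) := by
      intro s
      induction s using Finset.induction_on with
      | empty =>
        refine ⟨∅, fun x => ?_⟩
        rw [aux_degIn_empty]
        simp
      | insert a s hnotmem ih =>
        obtain ⟨F, hF⟩ := ih
        have hr : G.simple.Reachable a (rep (G.simple.connectedComponentMk a)) := by
          apply SimpleGraph.ConnectedComponent.exact
          rw [hrepspec]
        obtain ⟨Fa, hFa⟩ := aux_exists_parity G a (rep (G.simple.connectedComponentMk a)) hr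
        refine ⟨Fa ∆ F, fun x => ?_⟩
        rw [aux_degIn_symmDiff, hFa, hF, Finset.sum_insert hnotmem]
    obtain ⟨F, hF⟩ := key Finset.univ
    refine ⟨F, fun x => ?_⟩
    rw [← ZMod.natCast_eq_one_iff_odd, hF, Finset.sum_add_distrib]
    have h1 : (∑ v : V, (if x = v then (1 : ZMod 2) else 0)) = 1 := by
      rw [Finset.sum_ite_eq]
      simp
    have h2 : (∑ v : V, (if x = rep (G.simple.connectedComponentMk v) then (1 : ZMod 2) else 0))
        = ((Finset.univ.filter
            (fun v => x = rep (G.simple.connectedComponentMk v))).card : ZMod 2) := by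
      rw [Finset.card_filter]
      push_cast
      rfl
    rw [h1, h2]
    have hkey : (Finset.univ.filter (fun v => x = rep (G.simple.connectedComponentMk v)))
        = if x = rep (G.simple.connectedComponentMk x)
          then Finset.univ.filter
            (fun v => G.simple.connectedComponentMk v = G.simple.connectedComponentMk x)
          else ∅ := by
      split
      · rename_i hx
        ext v
        simp only [Finset.mem_filter, Finset.mem_univ, true_and]
        constructor
        · intro h
          have : G.simple.connectedComponentMk x
              = G.simple.connectedComponentMk (rep (G.simple.connectedComponentMk v)) := by
            rw [← h]
          rw [hrepspec] at this
          exact this.symm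
        · intro h
          rw [h]; exact hx
      · rename_i hx
        apply Finset.eq_empty_of_forall_notMem
        intro v hv
        rw [Finset.mem_filter] at hv
        have h := hv.2
        have : G.simple.connectedComponentMk x
            = G.simple.connectedComponentMk (rep (G.simple.connectedComponentMk v)) := by
          rw [← h]
        rw [hrepspec] at this
        rw [this] at hx
        exact hx h
    rw [hkey]
    split
    · have heven : Even ((Finset.univ.filter
          (fun v => G.simple.connectedComponentMk v = G.simple.connectedComponentMk x)).card) := by
        rw [← hcard]
        exact hc _
      rw [← ZMod.natCast_eq_zero_iff_even] at heven
      rw [heven, add_zero]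
    · simp
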